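/- Let U ⊆ ℚ be a bounded semilinear set such that U ∩ (−ε,ε) = ∅ for some rational ε > 0 and U ∩ (−1)·U ≠ ∅. Then for every rational δ > 0 there exist nonzero rationals c₁, c₂, c₃, c₄ such that the set V = c₁·U ∩ c₂·U ∩ c₃·U ∩ c₄·U satisfies {−1, 1} ⊆ V and V ⊆ (−1−δ, −1+δ) ∪ (1−δ, 1+δ). -/

import Mathlib

/-- A linear set in ℚ^n: the solution set of a finite conjunction of linear
inequalities `c₁x₁+…+cₙxₙ ≤ b` or `c₁x₁+…+cₙxₙ < b` with rational coefficients. -/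
def IsLinearSetQ (n : ℕ) (S : Set (Fin n → ℚ)) : Prop :=
  ∃ (m : ℕ) (c : Fin m → Fin n → ℚ) (b : Fin m → ℚ) (strict : Fin m → Bool),
    S = {x | ∀ i, if strict i then (∑ j, c i j * x j) < b i else (∑ j, c i j * x j) ≤ b i}

/-- A semilinear set: a finite union of linear sets. -/
def IsSemilinear (n : ℕ) (S : Set (Fin n → ℚ)) : Prop :=
  ∃ (k : ℕ) (f : Fin k → Set (Fin n → ℚ)), (∀ i, IsLinearSetQ n (f i)) ∧ S = ⋃ i, f i

/-- A unary semilinear relation: a semilinear subset of ℚ. -/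
def IsSemilinear1 (U : Set ℚ) : Prop :=
  IsSemilinear 1 {v : Fin 1 → ℚ | v 0 ∈ U}

/-- A set U ⊆ ℚ is bounded if U ⊆ [−a, a] for some a ∈ ℚ. -/
def BoundedSet (U : Set ℚ) : Prop := ∃ a : ℚ, U ⊆ Set.Icc (-a) a

/-- c·U = {c·x | x ∈ U}. -/
def scaleSet (c : ℚ) (U : Set ℚ) : Set ℚ := (fun x => c * x) '' U

lemma key (S : Set ℚ) (hne : S.Nonempty) {ε a : ℚ} (hε : 0 < ε)
    (hlb : ∀ y ∈ S, ε ≤ y) (hub : ∀ y ∈ S, y ≤ a) {r : ℚ} (hr : 1 < r) :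
    ∃ s ∈ S, ∀ y ∈ S, y < r * s := by
  by_contra h
  push_neg at h
  have grow : ∀ n : ℕ, ∃ s ∈ S, ε * r ^ n ≤ s := by
    intro n
    induction n with
    | zero => obtain ⟨s, hs⟩ := hne; exact ⟨s, hs, by simpa using hlb s hs⟩
    | succ n ih =>
      obtain ⟨s, hsS, hs⟩ := ih
      obtain ⟨y, hyS, hy⟩ := h s hsS
      refine ⟨y, hyS, ?_⟩
      calc ε * r ^ (n+1) = r * (ε * r ^ n) := by ring
        _ ≤ r * s := by nlinarith
        _ ≤ y := hy
  obtain ⟨n, hn⟩ := pow_unbounded_of_one_lt (a / ε) hr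
  obtain ⟨s, hsS, hs⟩ := grow n
  have : a < ε * r ^ n := by rw [div_lt_iff₀ hε] at hn; linarith
  linarith [hub s hsS, hs]

lemma scale_mem {c x : ℚ} (hc : c ≠ 0) {U : Set ℚ} (h : x ∈ scaleSet c⁻¹ U) : c * x ∈ U := by
  obtain ⟨u, hu, he⟩ := h
  have : c * x = u := by rw [← he, ← mul_assoc, mul_inv_cancel₀ hc, one_mul]
  rwa [this]

/-- Let U ⊆ ℚ be a bounded semilinear set with U ∩ (−ε,ε) = ∅ for some rational
ε > 0 and U ∩ (−1)·U ≠ ∅.  Then for every rational δ > 0 there are nonzero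
rationals c₁, c₂, c₃, c₄ such that V = c₁·U ∩ c₂·U ∩ c₃·U ∩ c₄·U satisfies
{−1, 1} ⊆ V and V ⊆ (−1−δ, −1+δ) ∪ (1−δ, 1+δ). -/
theorem stmt4 (U : Set ℚ) (hU : IsSemilinear1 U) (hb : BoundedSet U)
    (ε : ℚ) (hε : 0 < ε) (hdisj : U ∩ Set.Ioo (-ε) ε = ∅)
    (hsym : (U ∩ scaleSet (-1) U).Nonempty)
    (δ : ℚ) (hδ : 0 < δ) :
    ∃ c₁ c₂ c₃ c₄ : ℚ, c₁ ≠ 0 ∧ c₂ ≠ 0 ∧ c₃ ≠ 0 ∧ c₄ ≠ 0 ∧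
      ({-1, 1} : Set ℚ) ⊆ scaleSet c₁ U ∩ scaleSet c₂ U ∩ scaleSet c₃ U ∩ scaleSet c₄ U ∧
      scaleSet c₁ U ∩ scaleSet c₂ U ∩ scaleSet c₃ U ∩ scaleSet c₄ U ⊆
        Set.Ioo (-1 - δ) (-1 + δ) ∪ Set.Ioo (1 - δ) (1 + δ) := by
  obtain ⟨a, ha⟩ := hb
  have haux : ∀ x ∈ U, ε ≤ |x| := by
    intro x hx
    by_contra h
    push_neg at h
    rw [abs_lt] at h
    exact absurd (Set.mem_inter hx (Set.mem_Ioo.mpr ⟨h.1, h.2⟩)) (hdisj ▸ Set.notMem_empty x)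
  obtain ⟨t, htU, u, huU, hut⟩ := hsym
  have hmt : -t ∈ U := by
    have h' : -u = t := by simpa using hut
    have : u = -t := by linarith
    rwa [← this]
  have ht0 : t ≠ 0 := by
    intro h
    have := haux t htU
    rw [h, abs_zero] at this
    linarith
  set S : Set ℚ := {y | 0 < y ∧ y ∈ U ∧ -y ∈ U} with hSdef
  have hSne : S.Nonempty := by
    refine ⟨|t|, ?_⟩
    simp only [hSdef, Set.mem_setOf_eq]
    refine ⟨abs_pos.2 ht0, ?_, ?_⟩
    · rcases le_or_gt 0 t with h | h
      · rwa [abs_of_nonneg h]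
      · rwa [abs_of_neg h]
    · rcases le_or_gt 0 t with h | h
      · rwa [abs_of_nonneg h]
      · rw [abs_of_neg h, neg_neg]; exact htU
  have hSlb : ∀ y ∈ S, ε ≤ y := by
    intro y hy
    have := haux y hy.2.1
    rwa [abs_of_pos hy.1] at this
  have hSub : ∀ y ∈ S, y ≤ a := fun y hy => (ha hy.2.1).2
  have ha0 : 0 < a := by
    obtain ⟨y, hy⟩ := hSne
    linarith [hSlb y hy, hSub y hy]
  set γ : ℚ := min δ 1 / 2 with hγdef
  have hγ0 : 0 < γ := by positivity
  have hγδ : γ ≤ δ := by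
    have := min_le_left δ 1; simp only [hγdef]; linarith
  have hγ1 : γ < 1 := by
    have := min_le_right δ 1; simp only [hγdef]; linarith
  obtain ⟨s, hsS, hs⟩ := key S hSne hε hSlb hSub (r := 1 + δ) (by linarith)
  have hs0 : 0 < s := hsS.1
  -- inverse set for the infimum side
  set T : Set ℚ := (fun y => y⁻¹) '' S with hTdef
  have hTne : T.Nonempty := hSne.image _
  have hTlb : ∀ w ∈ T, a⁻¹ ≤ w := by
    rintro w ⟨y, hy, rfl⟩
    exact inv_anti₀ hy.1 (hSub y hy)
  have hTub : ∀ w ∈ T, w ≤ ε⁻¹ := by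
    rintro w ⟨y, hy, rfl⟩
    exact inv_anti₀ hε (hSlb y hy)
  have hr2 : (1 : ℚ) < (1 - γ)⁻¹ := (one_lt_inv₀ (by linarith)).2 (by linarith)
  obtain ⟨z, hzT, hz⟩ := key T hTne (inv_pos.2 ha0) hTlb hTub hr2
  obtain ⟨s', hs'S, rfl⟩ := hzT
  have hs'0 : 0 < s' := hs'S.1
  have hlow : ∀ y ∈ S, (1 - γ) * s' < y := by
    intro y hy
    have h1 : y⁻¹ < (1 - γ)⁻¹ * s'⁻¹ := hz _ ⟨y, hy, rfl⟩
    have h2 : y⁻¹ < ((1 - γ) * s')⁻¹ := by rwa [mul_inv]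
    have hy0 : 0 < y := hy.1
    have hgs : 0 < (1 - γ) * s' := by nlinarith
    rwa [inv_lt_inv₀ hy0 hgs] at h2
  refine ⟨s⁻¹, (-s)⁻¹, s'⁻¹, (-s')⁻¹,
    inv_ne_zero (ne_of_gt hs0), inv_ne_zero (neg_ne_zero.2 (ne_of_gt hs0)),
    inv_ne_zero (ne_of_gt hs'0), inv_ne_zero (neg_ne_zero.2 (ne_of_gt hs'0)), ?_, ?_⟩
  · have hsne : s ≠ 0 := ne_of_gt hs0
    have hs'ne : s' ≠ 0 := ne_of_gt hs'0
    rintro x (rfl | rfl)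
    · exact ⟨⟨⟨⟨-s, hsS.2.2, by field_simp⟩, ⟨s, hsS.2.1, by field_simp⟩⟩,
        ⟨-s', hs'S.2.2, by field_simp⟩⟩, ⟨s', hs'S.2.1, by field_simp⟩⟩
    · exact ⟨⟨⟨⟨s, hsS.2.1, by field_simp⟩, ⟨-s, hsS.2.2, by field_simp⟩⟩,
        ⟨s', hs'S.2.1, by field_simp⟩⟩, ⟨-s', hs'S.2.2, by field_simp⟩⟩
  · rintro x ⟨⟨⟨h1, h2⟩, h3⟩, h4⟩
    have hu1 : s * x ∈ U := scale_mem (ne_of_gt hs0) h1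
    have hu2 : -s * x ∈ U := scale_mem (by intro h; simp at h; linarith) h2
    have hu3 : s' * x ∈ U := scale_mem (ne_of_gt hs'0) h3
    have hu4 : -s' * x ∈ U := scale_mem (by intro h; simp at h; linarith) h4
    have hx0 : x ≠ 0 := by
      intro h
      have := haux (s * x) hu1
      rw [h, mul_zero, abs_zero] at this
      linarith
    rcases lt_or_gt_of_ne hx0 with hx | hx
    · -- x < 0
      left
      have hyS : s * (-x) ∈ S := by
        refine ⟨by nlinarith, ?_, ?_⟩
        · have : s * (-x) = -s * x := by ring
          rwa [this]
        · have : -(s * (-x)) = s * x := by ring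
          rwa [this]
      have hy'S : s' * (-x) ∈ S := by
        refine ⟨by nlinarith, ?_, ?_⟩
        · have : s' * (-x) = -s' * x := by ring
          rwa [this]
        · have : -(s' * (-x)) = s' * x := by ring
          rwa [this]
      have hup := hs _ hyS
      have hdn := hlow _ hy'S
      constructor
      · nlinarith
      · nlinarith
    · -- x > 0
      right
      have hyS : s * x ∈ S := by
        refine ⟨by nlinarith, hu1, ?_⟩
        have : -(s * x) = -s * x := by ring
        rwa [this]
      have hy'S : s' * x ∈ S := ⟨by nlinarith, hu3, by rw [show -(s' * x) = -s' * x by ring]; exact hu4⟩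
      have hup := hs _ hyS
      have hdn := hlow _ hy'S
      constructor
      · nlinarith
      · nlinarith
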